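/- Let s ≥ 1 and n ≥ 2s. Let θ⁺ ∈ ℂ^s have nonzero pairwise-distinct entries and let g⁺ ∈ ℂ^s have all entries nonzero. Then for almost every z = (z_0,…,z_{3s−1}) ∈ ℂ^{3s} (with respect to Lebesgue measure on ℂ^{3s} ≅ ℝ^{6s}) the following holds: v⁺(z_j) ≠ 0 for all j, and every triple of polynomials v, û, ũ ∈ ℂ[z] with deg v ≤ s, deg û ≤ s−1, deg ũ ≤ s−1 satisfying y_j·v(z_j) − z_j^n·û(z_j) − ũ(z_j) = 0 for all 0 ≤ j ≤ 3s−1 (where y_j = u⁺(z_j)/v⁺(z_j)) is of the form v = c·v⁺, û = c·û⁺, ũ = c·ũ⁺ for some c ∈ ℂ. -/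

import Mathlib

open Polynomial Finset Complex MeasureTheory

/-- `t_l(z) = ∏_{i ≠ l} (z·θ_i − 1)`. -/
noncomputable def tPoly (s : ℕ) (θ : Fin s → ℂ) (l : Fin s) : Polynomial ℂ :=
  ∏ i ∈ Finset.univ.erase l, (Polynomial.C (θ i) * Polynomial.X - 1)

/-- `û(z) = Σ_l g_l · θ_l^n · t_l(z)`. -/
noncomputable def uHat (s n : ℕ) (θ g : Fin s → ℂ) : Polynomial ℂ :=
  ∑ l : Fin s, Polynomial.C (g l * θ l ^ n) * tPoly s θ l

/-- `ũ(z) = −Σ_l g_l · t_l(z)`. -/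
noncomputable def uTilde (s : ℕ) (θ g : Fin s → ℂ) : Polynomial ℂ :=
  -∑ l : Fin s, Polynomial.C (g l) * tPoly s θ l

/-- `v(z) = ∏_l (z·θ_l − 1)`. -/
noncomputable def vPoly (s : ℕ) (θ : Fin s → ℂ) : Polynomial ℂ :=
  ∏ l : Fin s, (Polynomial.C (θ l) * Polynomial.X - 1)

/-- `u(z) = z^n·û(z) + ũ(z)`. -/
noncomputable def uPoly (s n : ℕ) (θ g : Fin s → ℂ) : Polynomial ℂ :=
  Polynomial.X ^ n * uHat s n θ g + uTilde s θ g


lemma aux_ae_eval_ne_zero : ∀ (N : ℕ) (p : MvPolynomial (Fin N) ℂ), p ≠ 0 →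
    ∀ᵐ z : Fin N → ℂ ∂volume, MvPolynomial.eval z p ≠ 0 := by
  intro N
  induction N with
  | zero =>
    intro p hp
    obtain ⟨a, rfl⟩ := MvPolynomial.C_surjective (Fin 0) p
    have ha : a ≠ 0 := fun h => hp (by simp [h])
    filter_upwards with z
    simpa using ha
  | succ N ih =>
    intro p hp
    set P' := MvPolynomial.finSuccEquiv ℂ N p with hP'
    have hP'0 : P' ≠ 0 := by
      rw [hP']
      intro h
      exact hp ((map_eq_zero_iff _ (AlgEquiv.injective _)).mp h)
    have hlc : P'.coeff P'.natDegree ≠ 0 := by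
      rw [← Polynomial.leadingCoeff]
      exact Polynomial.leadingCoeff_ne_zero.mpr hP'0
    have hmeas : MeasurableSet {q : ℂ × (Fin N → ℂ) | MvPolynomial.eval (Fin.cons q.1 q.2) p = 0} := by
      have hcont : Continuous fun q : ℂ × (Fin N → ℂ) => MvPolynomial.eval (Fin.cons q.1 q.2) p := by
        apply (MvPolynomial.continuous_eval p).comp
        exact continuous_pi fun i => by
          refine Fin.cases ?_ ?_ i
          · exact continuous_fst
          · intro j; exact (continuous_apply j).comp continuous_snd
      exact (isClosed_singleton.preimage hcont).measurableSet
    rw [MeasureTheory.ae_iff]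
    have hset : {z : Fin (N+1) → ℂ | ¬ MvPolynomial.eval z p ≠ 0} =
        (MeasurableEquiv.piFinSuccAbove (fun _ : Fin (N+1) => ℂ) 0) ⁻¹'
          {q : ℂ × (Fin N → ℂ) | MvPolynomial.eval (Fin.cons q.1 q.2) p = 0} := by
      ext z
      simp [MeasurableEquiv.piFinSuccAbove_apply, Fin.removeNth_zero, Fin.cons_self_tail]
    rw [hset]
    have hmp := MeasureTheory.volume_preserving_piFinSuccAbove (fun _ : Fin (N+1) => ℂ) 0
    rw [hmp.measure_preimage hmeas.nullMeasurableSet]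
    rw [MeasureTheory.Measure.volume_eq_prod]
    have hswap : ((volume : Measure ℂ).prod volume)
        {q : ℂ × (Fin N → ℂ) | MvPolynomial.eval (Fin.cons q.1 q.2) p = 0} =
        ((volume : Measure (Fin N → ℂ)).prod volume)
          (Prod.swap ⁻¹' {q : ℂ × (Fin N → ℂ) | MvPolynomial.eval (Fin.cons q.1 q.2) p = 0}) := by
      rw [← MeasureTheory.Measure.prod_swap]
      rw [MeasureTheory.Measure.map_apply measurable_swap hmeas]
    rw [hswap]
    rw [MeasureTheory.Measure.measure_prod_null (hmeas.preimage measurable_swap)]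
    filter_upwards [ih (P'.coeff P'.natDegree) hlc] with y hy
    have hslice : (Prod.mk y ⁻¹' (Prod.swap ⁻¹'
        {q : ℂ × (Fin N → ℂ) | MvPolynomial.eval (Fin.cons q.1 q.2) p = 0})) =
        {x : ℂ | Polynomial.eval x (Polynomial.map (MvPolynomial.eval y) P') = 0} := by
      ext x
      simp [MvPolynomial.eval_eq_eval_mv_eval', hP']
    rw [hslice]
    have hq : Polynomial.map (MvPolynomial.eval y) P' ≠ 0 := by
      intro h
      apply hy
      have := congrArg (fun q => Polynomial.coeff q P'.natDegree) h
      simpa [Polynomial.coeff_map] using this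
    exact (Polynomial.finite_setOf_isRoot hq).measure_zero _


lemma aux_eval_coord {m : ℕ} (q : Polynomial ℂ) (z : Fin m → ℂ) (j : Fin m) :
    MvPolynomial.eval z (Polynomial.eval₂ MvPolynomial.C (MvPolynomial.X j) q) = q.eval (z j) := by
  rw [Polynomial.hom_eval₂]
  have h1 : (MvPolynomial.eval z).comp (MvPolynomial.C (σ := Fin m) (R := ℂ)) = RingHom.id ℂ := by
    ext a; simp
  rw [h1]
  rw [MvPolynomial.eval_X, Polynomial.eval₂_id]

lemma aux_det_exists : ∀ (d : ℕ) (p : Fin d → Polynomial ℂ),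
    (∀ c : Fin d → ℂ, ∑ i, Polynomial.C (c i) * p i = 0 → c = 0) →
    ∃ z : Fin d → ℂ, (Matrix.of fun i j => (p i).eval (z j)).det ≠ 0 := by
  intro d
  induction d with
  | zero => intro p _; exact ⟨fun i => 0, by simp [Matrix.det_fin_zero]⟩
  | succ d ih =>
    intro p hind
    -- first d polynomials are independent
    obtain ⟨z, hz⟩ := ih (fun i => p i.castSucc) (by
      intro c hc
      have := hind (Fin.snoc c 0) (by
        rw [Fin.sum_univ_castSucc]
        simpa using hc)
      funext i
      have := congrFun this i.castSucc
      simpa using this)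
    -- cofactors
    set A : Fin (d+1) → Matrix (Fin d) (Fin d) ℂ :=
      fun i => Matrix.of fun i' j' => (p (i.succAbove i')).eval (z j') with hA
    set G : Polynomial ℂ :=
      ∑ i : Fin (d+1), Polynomial.C ((-1) ^ ((i : ℕ) + d) * (A i).det) * p i with hG
    have hGlast : (-1 : ℂ) ^ ((Fin.last d : ℕ) + d) * (A (Fin.last d)).det ≠ 0 := by
      have : A (Fin.last d) = Matrix.of fun i' j' => (p i'.castSucc).eval (z j') := by
        ext i' j'; simp [hA, Fin.succAbove_last]
      rw [this]
      simpa using hz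
    have hG0 : G ≠ 0 := by
      intro h
      have := hind (fun i => (-1) ^ ((i : ℕ) + d) * (A i).det) (by rw [← hG]; exact h)
      exact hGlast (congrFun this (Fin.last d))
    obtain ⟨w, hw⟩ : ∃ w : ℂ, G.eval w ≠ 0 := by
      by_contra h
      push_neg at h
      exact hG0 (Polynomial.funext fun r => by simp [h r])
    refine ⟨Fin.snoc z w, ?_⟩
    rw [Matrix.det_succ_column _ (Fin.last d)]
    have hterm : ∀ i : Fin (d+1),
        (-1 : ℂ) ^ ((i : ℕ) + ((Fin.last d) : ℕ)) *
          (Matrix.of fun i j => (p i).eval (Fin.snoc z w j)) i (Fin.last d) *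
          ((Matrix.of fun i j => (p i).eval (Fin.snoc z w j)).submatrix i.succAbove
            (Fin.last d).succAbove).det
        = (-1) ^ ((i : ℕ) + d) * (A i).det * (p i).eval w := by
      intro i
      have h1 : (Matrix.of fun i j => (p i).eval (Fin.snoc z w j)).submatrix i.succAbove
          (Fin.last d).succAbove = A i := by
        ext i' j'
        simp [Fin.succAbove_last, hA, Fin.snoc_castSucc]
      rw [h1]
      simp only [Matrix.of_apply, Fin.snoc_last, Fin.val_last]
      ring
    rw [Finset.sum_congr rfl fun i _ => hterm i]
    have : G.eval w = ∑ i : Fin (d+1), (-1) ^ ((i : ℕ) + d) * (A i).det * (p i).eval w := by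
      simp [hG, Polynomial.eval_finset_sum]
    rw [← this]
    exact hw

lemma tPoly_natDegree_le (s : ℕ) (θ : Fin s → ℂ) (l : Fin s) :
    (tPoly s θ l).natDegree ≤ s - 1 := by
  refine le_trans (Polynomial.natDegree_prod_le _ _) ?_
  have : ∀ i ∈ Finset.univ.erase l, (Polynomial.C (θ i) * Polynomial.X - 1).natDegree ≤ 1 := by
    intro i _
    refine le_trans (Polynomial.natDegree_sub_le _ _) (max_le ?_ ?_)
    · exact le_trans (Polynomial.natDegree_C_mul_le _ _) (le_of_eq Polynomial.natDegree_X)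
    · simp
  refine le_trans (Finset.sum_le_card_nsmul _ _ 1 this) ?_
  simp [Finset.card_erase_of_mem]

lemma uHat_natDegree_le (s n : ℕ) (θ g : Fin s → ℂ) :
    (uHat s n θ g).natDegree ≤ s - 1 := by
  refine Polynomial.natDegree_sum_le_of_forall_le _ _ fun l _ => ?_
  exact le_trans (Polynomial.natDegree_C_mul_le _ _) (tPoly_natDegree_le s θ l)

lemma uTilde_natDegree_le (s : ℕ) (θ g : Fin s → ℂ) :
    (uTilde s θ g).natDegree ≤ s - 1 := by
  rw [uTilde, Polynomial.natDegree_neg]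
  refine Polynomial.natDegree_sum_le_of_forall_le _ _ fun l _ => ?_
  exact le_trans (Polynomial.natDegree_C_mul_le _ _) (tPoly_natDegree_le s θ l)

lemma vPoly_eval_zero (s : ℕ) (θ : Fin s → ℂ) : (vPoly s θ).eval 0 = (-1) ^ s := by
  rw [vPoly, Polynomial.eval_prod]
  simp

lemma vPoly_ne_zero (s : ℕ) (θ : Fin s → ℂ) : vPoly s θ ≠ 0 := by
  intro h
  have := vPoly_eval_zero s θ
  rw [h] at this
  simp at this
  exact pow_ne_zero s (neg_ne_zero.mpr one_ne_zero) this.symm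

lemma vPoly_natDegree (s : ℕ) (θ : Fin s → ℂ) (hθ0 : ∀ l, θ l ≠ 0) :
    (vPoly s θ).natDegree = s := by
  rw [vPoly, Polynomial.natDegree_prod]
  · have : ∀ l : Fin s, (Polynomial.C (θ l) * Polynomial.X - 1).natDegree = 1 := by
      intro l
      have h1 : Polynomial.C (θ l) * Polynomial.X - 1
          = Polynomial.C (θ l) * Polynomial.X + Polynomial.C (-1) := by
        simp [sub_eq_add_neg]
      rw [h1, Polynomial.natDegree_linear (hθ0 l)]
    simp [this]
  · intro l _
    intro h
    have := congrArg (Polynomial.eval 0) h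
    simp at this

lemma lemH (s n : ℕ) (θ g : Fin s → ℂ) :
    uPoly s n θ g = vPoly s θ *
      ∑ l, Polynomial.C (g l) * (∑ j ∈ Finset.range n, (Polynomial.C (θ l) * Polynomial.X) ^ j) := by
  rw [uPoly, uHat, uTilde, Finset.mul_sum, ← sub_eq_add_neg, ← Finset.sum_sub_distrib,
    Finset.mul_sum]
  refine Finset.sum_congr rfl fun l _ => ?_
  have hv : vPoly s θ = (Polynomial.C (θ l) * Polynomial.X - 1) * tPoly s θ l := by
    rw [vPoly, tPoly]
    exact (Finset.mul_prod_erase _ _ (Finset.mem_univ l)).symm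
  have hg : ((Polynomial.C (θ l) * Polynomial.X) ^ n - 1) =
      (∑ j ∈ Finset.range n, (Polynomial.C (θ l) * Polynomial.X) ^ j) *
        (Polynomial.C (θ l) * Polynomial.X - 1) := (geom_sum_mul _ n).symm
  calc X ^ n * (C (g l * θ l ^ n) * tPoly s θ l) - C (g l) * tPoly s θ l
      = C (g l) * (((C (θ l) * X) ^ n - 1) * tPoly s θ l) := by
        rw [mul_pow, ← Polynomial.C_pow, Polynomial.C_mul]; ring
    _ = _ := by rw [hg, hv]; ring

lemma lemSep (s n : ℕ) (hs : 1 ≤ s) (hn : 2 * s ≤ n) (uh ut : Polynomial ℂ)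
    (huh : uh.natDegree ≤ s - 1) (hut : ut.natDegree ≤ s - 1)
    (h : X ^ n * uh + ut = 0) : uh = 0 ∧ ut = 0 := by
  by_cases h0 : uh = 0
  · subst h0
    simp only [mul_zero, zero_add] at h
    exact ⟨rfl, h⟩
  · exfalso
    have hut' : ut = -(X ^ n * uh) := by linear_combination h
    have hX : (X : Polynomial ℂ) ^ n ≠ 0 := pow_ne_zero _ Polynomial.X_ne_zero
    have hdeg : (X ^ n * uh).natDegree = n + uh.natDegree := by
      rw [Polynomial.natDegree_mul hX h0, Polynomial.natDegree_X_pow]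
    have : n ≤ ut.natDegree := by
      rw [hut', Polynomial.natDegree_neg, hdeg]; omega
    omega

lemma geo_mul_coeff (n s : ℕ) (θc : ℂ) (v : Polynomial ℂ) (hv : v.natDegree ≤ s)
    (d : ℕ) (hds : s ≤ d) (hdn : d < n) :
    ((∑ j ∈ Finset.range n, (Polynomial.C θc * Polynomial.X) ^ j) * v).coeff d =
      θc ^ (d - s) * ∑ k ∈ Finset.range (s + 1), v.coeff k * θc ^ (s - k) := by
  have h1 : (∑ j ∈ Finset.range n, (Polynomial.C θc * Polynomial.X) ^ j) * v =
      ∑ j ∈ Finset.range n, Polynomial.C (θc ^ j) * (v * Polynomial.X ^ j) := by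
    rw [Finset.sum_mul]
    refine Finset.sum_congr rfl fun j _ => ?_
    rw [mul_pow, ← Polynomial.C_pow]; ring
  rw [h1, Polynomial.finset_sum_coeff]
  have h2 : ∀ j, (Polynomial.C (θc ^ j) * (v * Polynomial.X ^ j)).coeff d =
      θc ^ j * (if j ≤ d then v.coeff (d - j) else 0) := by
    intro j
    rw [Polynomial.coeff_C_mul, Polynomial.coeff_mul_X_pow']
  have h3 : ∑ j ∈ Finset.range n, (Polynomial.C (θc ^ j) * (v * Polynomial.X ^ j)).coeff d
      = ∑ j ∈ Finset.range (d + 1), θc ^ j * v.coeff (d - j) := by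
    rw [← Finset.sum_subset (Finset.range_subset_range.mpr hdn)]
    · refine Finset.sum_congr rfl fun j hj => ?_
      rw [h2 j, if_pos (Nat.lt_succ_iff.mp (Finset.mem_range.mp hj))]
    · intro j _ hj
      rw [h2 j, if_neg (by simpa using Finset.mem_range.not.mp hj), mul_zero]
  rw [h3]
  have h4 : ∑ j ∈ Finset.range (d + 1), θc ^ j * v.coeff (d - j)
      = ∑ j ∈ Finset.range (d + 1), θc ^ (d - j) * v.coeff j := by
    rw [← Finset.sum_range_reflect (fun j => θc ^ (d - j) * v.coeff j) (d + 1)]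
    refine Finset.sum_congr rfl fun j hj => ?_
    have hj' : j ≤ d := Nat.lt_succ_iff.mp (Finset.mem_range.mp hj)
    congr 2 <;> omega
  rw [h4]
  have h5 : ∑ j ∈ Finset.range (d + 1), θc ^ (d - j) * v.coeff j
      = ∑ j ∈ Finset.range (s + 1), θc ^ (d - j) * v.coeff j := by
    rw [← Finset.sum_subset (Finset.range_subset_range.mpr (by omega : s + 1 ≤ d + 1))]
    intro j _ hj
    have : s < j := by simpa using Finset.mem_range.not.mp hj
    rw [Polynomial.coeff_eq_zero_of_natDegree_lt (by omega), mul_zero]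
  rw [h5, Finset.mul_sum]
  refine Finset.sum_congr rfl fun j hj => ?_
  have hj' : j ≤ s := Nat.lt_succ_iff.mp (Finset.mem_range.mp hj)
  have : d - j = (d - s) + (s - j) := by omega
  rw [this, pow_add]; ring

lemma refl_prod {ι : Type*} [DecidableEq ι] (t : Finset ι) (θ : ι → ℂ) :
    Polynomial.reflect t.card (∏ l ∈ t, (Polynomial.X - Polynomial.C (θ l))) =
      ∏ l ∈ t, (1 - Polynomial.C (θ l) * Polynomial.X) := by
  induction t using Finset.induction_on with
  | empty =>
    simp only [Finset.card_empty, Finset.prod_empty]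
    rw [← Polynomial.C_1, Polynomial.reflect_C, pow_zero, mul_one]
  | insert _ _ ha ih =>
    rename_i a t
    rw [Finset.card_insert_of_notMem ha, Finset.prod_insert ha, Finset.prod_insert ha]
    have hdeg : (∏ l ∈ t, (Polynomial.X - Polynomial.C (θ l))).natDegree ≤ t.card := by
      refine le_trans (Polynomial.natDegree_prod_le _ _) ?_
      refine le_trans (Finset.sum_le_card_nsmul _ _ 1 fun i _ => ?_) (by simp)
      exact le_of_eq (Polynomial.natDegree_X_sub_C _)
    have h1 : t.card + 1 = 1 + t.card := by omega
    rw [h1, Polynomial.reflect_mul _ _ (by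
        exact le_of_eq (Polynomial.natDegree_X_sub_C _)) hdeg, ih]
    congr 1
    rw [Polynomial.reflect_sub, Polynomial.reflect_C]
    have : Polynomial.reflect 1 (Polynomial.X : Polynomial ℂ) = 1 := by
      have := Polynomial.reflect_monomial 1 1 (R := ℂ)
      simpa using this
    rw [this, pow_one]

lemma lemK (s n : ℕ) (hs : 1 ≤ s) (hn : 2 * s ≤ n) (θ g : Fin s → ℂ)
    (hθ0 : ∀ l, θ l ≠ 0) (hθinj : Function.Injective θ) (hg : ∀ l, g l ≠ 0)
    (v uh ut : Polynomial ℂ)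
    (hv : v.natDegree ≤ s) (huh : uh.natDegree ≤ s - 1) (hut : ut.natDegree ≤ s - 1)
    (heq : uPoly s n θ g * v = vPoly s θ * (X ^ n * uh + ut)) :
    ∃ c : ℂ, v = Polynomial.C c * vPoly s θ ∧ uh = Polynomial.C c * uHat s n θ g ∧
      ut = Polynomial.C c * uTilde s θ g := by
  set hh : Polynomial ℂ :=
    ∑ l, Polynomial.C (g l) * (∑ j ∈ Finset.range n, (Polynomial.C (θ l) * Polynomial.X) ^ j)
    with hhdef
  have hHv : hh * v = X ^ n * uh + ut := by
    have h1 : vPoly s θ * (hh * v) = vPoly s θ * (X ^ n * uh + ut) := by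
      rw [← heq, lemH s n θ g, ← hhdef]; ring
    exact mul_left_cancel₀ (vPoly_ne_zero s θ) h1
  -- the reversed evaluations
  set w : Fin s → ℂ := fun l => ∑ k ∈ Finset.range (s + 1), v.coeff k * θ l ^ (s - k) with hwdef
  have hcoeff : ∀ i : Fin s, ∑ l, (g l * w l) * θ l ^ (i : ℕ) = 0 := by
    intro i
    have hd1 : s ≤ s + (i : ℕ) := Nat.le_add_right _ _
    have hd2 : s + (i : ℕ) < n := by have := i.isLt; omega
    have hL : (hh * v).coeff (s + (i : ℕ)) = ∑ l, (g l * w l) * θ l ^ (i : ℕ) := by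
      rw [hhdef, Finset.sum_mul, Polynomial.finset_sum_coeff]
      refine Finset.sum_congr rfl fun l _ => ?_
      rw [mul_assoc, Polynomial.coeff_C_mul, geo_mul_coeff n s (θ l) v hv _ hd1 hd2]
      have h2 : s + (i : ℕ) - s = (i : ℕ) := by omega
      rw [h2]
      simp only [hwdef]
      ring
    have hR : (X ^ n * uh + ut).coeff (s + (i : ℕ)) = 0 := by
      rw [Polynomial.coeff_add, mul_comm, Polynomial.coeff_mul_X_pow',
        if_neg (by omega), Polynomial.coeff_eq_zero_of_natDegree_lt (by omega), add_zero]
    rw [← hL, hHv, hR]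
  have hgw : ∀ l, w l = 0 := by
    have := Matrix.eq_zero_of_forall_pow_sum_mul_pow_eq_zero hθinj hcoeff
    intro l
    have hl := congrFun this l
    simp only [Pi.zero_apply] at hl
    rcases mul_eq_zero.mp hl with h | h
    · exact absurd h (hg l)
    · exact h
  -- reflected polynomial
  set vt : Polynomial ℂ := Polynomial.reflect s v with hvtdef
  have hvtdeg : vt.natDegree ≤ s := by
    rw [Polynomial.natDegree_le_iff_coeff_eq_zero]
    intro N hN
    rw [hvtdef, Polynomial.coeff_reflect]
    have hrev : Polynomial.revAt s N = N := by
      exact if_neg (Nat.not_le.mpr hN)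
    rw [hrev]
    exact Polynomial.coeff_eq_zero_of_natDegree_lt (by omega)
  have hvrefl : v = Polynomial.reflect s vt := by
    ext i
    rw [Polynomial.coeff_reflect, hvtdef, Polynomial.coeff_reflect, Polynomial.revAt_invol]
  have heval : ∀ l, vt.eval (θ l) = 0 := by
    intro l
    rw [Polynomial.eval_eq_sum_range' (Nat.lt_succ_of_le hvtdeg)]
    have h1 : ∀ j ∈ Finset.range (s + 1), vt.coeff j * θ l ^ j
        = v.coeff (s - j) * θ l ^ j := by
      intro j hj
      rw [hvtdef, Polynomial.coeff_reflect,
        Polynomial.revAt_le (Nat.lt_succ_iff.mp (Finset.mem_range.mp hj))]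
    rw [Finset.sum_congr rfl h1]
    have h2 : ∑ j ∈ Finset.range (s + 1), v.coeff (s - j) * θ l ^ j = w l := by
      simp only [hwdef]
      rw [← Finset.sum_range_reflect (fun k => v.coeff k * θ l ^ (s - k)) (s + 1)]
      refine Finset.sum_congr rfl fun j hj => ?_
      have hj' : j ≤ s := Nat.lt_succ_iff.mp (Finset.mem_range.mp hj)
      congr 2 <;> omega
    rw [h2, hgw l]
  -- divisibility by the product of (X - θ l)
  set q : Polynomial ℂ := ∏ l, (Polynomial.X - Polynomial.C (θ l)) with hqdef
  have hqmonic : q.Monic := Polynomial.monic_prod_of_monic _ _ fun l _ => Polynomial.monic_X_sub_C _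
  have hqdeg : q.natDegree = s := by
    rw [hqdef, Polynomial.natDegree_prod_of_monic _ _ fun l _ => Polynomial.monic_X_sub_C _]
    simp
  have hdvd : q ∣ vt := by
    rw [hqdef]
    refine Finset.prod_dvd_of_coprime ?_ fun l _ => Polynomial.dvd_iff_isRoot.mpr (heval l)
    exact (Polynomial.pairwise_coprime_X_sub_C hθinj).set_pairwise _
  obtain ⟨r, hr⟩ := hdvd
  by_cases hvt0 : vt = 0
  · -- v = 0 case
    have hv0 : v = 0 := by rw [hvrefl, hvt0]; simp
    have h0 : X ^ n * uh + ut = 0 := by rw [← hHv, hv0, mul_zero]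
    obtain ⟨huh0, hut0⟩ := lemSep s n hs hn uh ut huh hut h0
    exact ⟨0, by simp [hv0, huh0, hut0]⟩
  · have hr0 : r ≠ 0 := by rintro rfl; rw [mul_zero] at hr; exact hvt0 hr
    have hrdeg : r.natDegree = 0 := by
      have := Polynomial.natDegree_mul hqmonic.ne_zero hr0
      rw [← hr, hqdeg] at this
      omega
    obtain ⟨c', hc'⟩ := Polynomial.natDegree_eq_zero.mp hrdeg
    have hvt : vt = q * Polynomial.C c' := by rw [hr, hc']
    -- reflect back
    have hvform : v = Polynomial.C ((-1) ^ s * c') * vPoly s θ := by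
      rw [hvrefl, hvt]
      have hrm := Polynomial.reflect_mul q (Polynomial.C c') (F := s) (G := 0)
        (le_of_eq hqdeg) (by simp)
      rw [Nat.add_zero] at hrm
      rw [hrm]
      have h2 : Polynomial.reflect 0 (Polynomial.C c') = Polynomial.C c' := by
        rw [Polynomial.reflect_C, pow_zero, mul_one]
      have h3 : Polynomial.reflect s q = Polynomial.C ((-1) ^ s) * vPoly s θ := by
        have := refl_prod (Finset.univ : Finset (Fin s)) θ
        rw [Finset.card_univ, Fintype.card_fin] at this
        rw [hqdef, this, vPoly]
        calc ∏ l : Fin s, (1 - Polynomial.C (θ l) * Polynomial.X)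
            = ∏ l : Fin s, ((-1) * (Polynomial.C (θ l) * Polynomial.X - 1)) :=
              Finset.prod_congr rfl fun l _ => by ring
          _ = (-1) ^ s * ∏ l : Fin s, (Polynomial.C (θ l) * Polynomial.X - 1) := by
              rw [Finset.prod_mul_distrib, Finset.prod_const, Finset.card_univ, Fintype.card_fin]
          _ = _ := by simp
      rw [h2, h3, Polynomial.C_mul]
      ring
    refine ⟨(-1) ^ s * c', hvform, ?_⟩
    have hXn : X ^ n * uh + ut = Polynomial.C ((-1) ^ s * c') * (X ^ n * uHat s n θ g + uTilde s θ g) := by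
      rw [← hHv, hvform]
      have : hh * (Polynomial.C ((-1) ^ s * c') * vPoly s θ)
          = Polynomial.C ((-1) ^ s * c') * (vPoly s θ * hh) := by ring
      rw [this, hhdef, ← lemH s n θ g, uPoly]
    have h0 : X ^ n * (uh - Polynomial.C ((-1) ^ s * c') * uHat s n θ g)
        + (ut - Polynomial.C ((-1) ^ s * c') * uTilde s θ g) = 0 := by
      linear_combination hXn
    obtain ⟨h1, h2⟩ := lemSep s n hs hn _ _
      (le_trans (Polynomial.natDegree_sub_le _ _) (max_le huh
        (le_trans (Polynomial.natDegree_C_mul_le _ _) (uHat_natDegree_le s n θ g))))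
      (le_trans (Polynomial.natDegree_sub_le _ _) (max_le hut
        (le_trans (Polynomial.natDegree_C_mul_le _ _) (uTilde_natDegree_le s θ g))))
      h0
    exact ⟨by linear_combination h1, by linear_combination h2⟩


lemma sum_blocks (s n : ℕ) (U V : Polynomial ℂ) (a b d : Fin s → ℂ) :
    ∑ q : Fin 3 × Fin s, Polynomial.C (![a, b, d] q.1 q.2) *
      (![U * X ^ (q.2 : ℕ), V * X ^ (n + (q.2 : ℕ)), V * X ^ (q.2 : ℕ)] q.1) =
    U * (∑ k : Fin s, Polynomial.C (a k) * X ^ (k : ℕ)) +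
      V * (X ^ n * ∑ k : Fin s, Polynomial.C (b k) * X ^ (k : ℕ)) +
      V * (∑ k : Fin s, Polynomial.C (d k) * X ^ (k : ℕ)) := by
  rw [Fintype.sum_prod_type, Fin.sum_univ_three]
  simp only [Matrix.cons_val_zero, Matrix.cons_val_one, Matrix.head_cons, Matrix.cons_val_two,
    Matrix.tail_cons]
  congr 1
  · congr 1
    · rw [Finset.mul_sum]
      exact Finset.sum_congr rfl fun k _ => by ring
    · rw [Finset.mul_sum, Finset.mul_sum]
      refine Finset.sum_congr rfl fun k _ => ?_
      rw [pow_add]; ring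
  · rw [Finset.mul_sum]
    exact Finset.sum_congr rfl fun k _ => by ring

lemma deg_sum_fin (s : ℕ) (hs : 1 ≤ s) (a : Fin s → ℂ) :
    (∑ k : Fin s, Polynomial.C (a k) * X ^ (k : ℕ)).natDegree ≤ s - 1 := by
  refine Polynomial.natDegree_sum_le_of_forall_le _ _ fun k _ => ?_
  refine le_trans (Polynomial.natDegree_C_mul_le _ _) ?_
  rw [Polynomial.natDegree_X_pow]
  have := k.isLt; omega

lemma coeff_sum_fin (s : ℕ) (a : Fin s → ℂ) (j : Fin s) :
    (∑ k : Fin s, Polynomial.C (a k) * X ^ (k : ℕ)).coeff (j : ℕ) = a j := by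
  rw [Polynomial.finset_sum_coeff]
  rw [Finset.sum_eq_single j]
  · simp
  · intro k _ hk
    rw [Polynomial.coeff_C_mul, Polynomial.coeff_X_pow,
      if_neg (fun h => hk (Fin.ext h.symm)), mul_zero]
  · intro h; exact absurd (Finset.mem_univ j) h

lemma rep_fin (s : ℕ) (hs : 1 ≤ s) (p : Polynomial ℂ) (hdeg : p.natDegree < s) :
    p = ∑ k : Fin s, Polynomial.C (p.coeff k) * X ^ (k : ℕ) := by
  conv_lhs => rw [Polynomial.as_sum_range' p s hdeg]
  rw [Finset.sum_range]
  exact Finset.sum_congr rfl fun k _ => (Polynomial.C_mul_X_pow_eq_monomial).symm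

/-- Theorem `thm:gen_samples`: for almost every `z ∈ ℂ^{3s}` (Lebesgue measure),
`v⁺(z_j) ≠ 0` for all `j`, and any `v, û, ũ` of degrees `≤ s, ≤ s−1, ≤ s−1` satisfying
`y_j v(z_j) − z_j^n û(z_j) − ũ(z_j) = 0` for all `j` are of the form `c·v⁺, c·û⁺, c·ũ⁺`. -/
theorem ae_samples_recovery (s n : ℕ) (hs : 1 ≤ s) (hn : 2 * s ≤ n)
    (θp gp : Fin s → ℂ)
    (hθ0 : ∀ l, θp l ≠ 0) (hθinj : Function.Injective θp)
    (hgp : ∀ l, gp l ≠ 0) :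
    ∀ᵐ z : Fin (3 * s) → ℂ ∂volume,
      (∀ j, (vPoly s θp).eval (z j) ≠ 0) ∧
      ∀ v uh ut : Polynomial ℂ,
        v.degree ≤ (s : ℕ) → uh.degree ≤ ((s - 1 : ℕ) : ℕ) →
        ut.degree ≤ ((s - 1 : ℕ) : ℕ) →
        (∀ j, ((uPoly s n θp gp).eval (z j) / (vPoly s θp).eval (z j)) * v.eval (z j)
            - (z j) ^ n * uh.eval (z j) - ut.eval (z j) = 0) →
        ∃ c : ℂ, v = Polynomial.C c * vPoly s θp ∧
          uh = Polynomial.C c * uHat s n θp gp ∧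
          ut = Polynomial.C c * uTilde s θp gp := by
  classical
  set U := uPoly s n θp gp with hUdef
  set V := vPoly s θp with hVdef
  set Uh := uHat s n θp gp with hUhdef
  set Ut := uTilde s θp gp with hUtdef
  have hVne : V ≠ 0 := vPoly_ne_zero s θp
  have hVnd : V.natDegree = s := vPoly_natDegree s θp hθ0
  have hVs : V.coeff s ≠ 0 := by
    rw [← hVnd]
    exact Polynomial.leadingCoeff_ne_zero.mpr hVne
  set e : Fin 3 × Fin s ≃ Fin (3 * s) := finProdFinEquiv with hedef
  set P : Fin (3 * s) → Polynomial ℂ := fun i =>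
    ![U * X ^ (((e.symm i).2 : ℕ)), V * X ^ (n + ((e.symm i).2 : ℕ)),
      V * X ^ (((e.symm i).2 : ℕ))] (e.symm i).1 with hPdef
  have hPe : ∀ q : Fin 3 × Fin s, P (e q) =
      ![U * X ^ ((q.2 : ℕ)), V * X ^ (n + (q.2 : ℕ)), V * X ^ ((q.2 : ℕ))] q.1 := by
    intro q
    rw [hPdef]
    simp only [Equiv.symm_apply_apply]
  -- linear independence of the P family
  have hindep : ∀ c : Fin (3 * s) → ℂ, ∑ i, Polynomial.C (c i) * P i = 0 → c = 0 := by
    intro c hc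
    set va := ∑ k : Fin s, Polynomial.C (c (e (0, k))) * X ^ (k : ℕ) with hva
    set vb := ∑ k : Fin s, Polynomial.C (c (e (1, k))) * X ^ (k : ℕ) with hvb
    set vd := ∑ k : Fin s, Polynomial.C (c (e (2, k))) * X ^ (k : ℕ) with hvd
    have hsum0 : U * va + V * (X ^ n * vb) + V * vd = 0 := by
      rw [hva, hvb, hvd,
        ← sum_blocks s n U V (fun k => c (e (0, k))) (fun k => c (e (1, k)))
          (fun k => c (e (2, k)))]
      rw [← hc, ← Equiv.sum_comp e (fun i => Polynomial.C (c i) * P i)]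
      refine Finset.sum_congr rfl fun q _ => ?_
      obtain ⟨x, y⟩ := q
      rw [hPe]
      congr 1
      fin_cases x <;> simp
    have heqK : U * va = V * (X ^ n * (-vb) + (-vd)) := by linear_combination hsum0
    obtain ⟨cc, hc1, hc2, hc3⟩ := lemK s n hs hn θp gp hθ0 hθinj hgp va (-vb) (-vd)
      (le_trans (deg_sum_fin s hs _) (by omega))
      (by rw [Polynomial.natDegree_neg]; exact deg_sum_fin s hs _)
      (by rw [Polynomial.natDegree_neg]; exact deg_sum_fin s hs _) heqK
    have hcc0 : cc = 0 := by
      have h1 : va.coeff s = 0 :=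
        Polynomial.coeff_eq_zero_of_natDegree_lt
          (lt_of_le_of_lt (deg_sum_fin s hs _) (by omega))
      rw [hc1, Polynomial.coeff_C_mul] at h1
      exact (mul_eq_zero.mp h1).resolve_right hVs
    rw [hcc0, map_zero, zero_mul] at hc1 hc2 hc3
    have hvb0 : vb = 0 := neg_eq_zero.mp hc2
    have hvd0 : vd = 0 := neg_eq_zero.mp hc3
    funext i
    obtain ⟨⟨x, y⟩, rfl⟩ := e.surjective i
    fin_cases x
    · have h := coeff_sum_fin s (fun k => c (e (0, k))) y
      rw [← hva, hc1, Polynomial.coeff_zero] at h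
      simpa using h.symm
    · have h := coeff_sum_fin s (fun k => c (e (1, k))) y
      rw [← hvb, hvb0, Polynomial.coeff_zero] at h
      simpa using h.symm
    · have h := coeff_sum_fin s (fun k => c (e (2, k))) y
      rw [← hvd, hvd0, Polynomial.coeff_zero] at h
      simpa using h.symm
  obtain ⟨z0, hz0⟩ := aux_det_exists (3 * s) P hindep
  set Mv : Matrix (Fin (3 * s)) (Fin (3 * s)) (MvPolynomial (Fin (3 * s)) ℂ) :=
    Matrix.of fun i j => Polynomial.eval₂ MvPolynomial.C (MvPolynomial.X j) (P i) with hMv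
  have hdeteval : ∀ z : Fin (3 * s) → ℂ, MvPolynomial.eval z Mv.det =
      (Matrix.of fun i j => (P i).eval (z j)).det := by
    intro z
    rw [RingHom.map_det]
    congr 1
    ext i j
    simp [hMv, aux_eval_coord]
  have hdetne : Mv.det ≠ 0 := fun h => hz0 (by rw [← hdeteval z0, h, map_zero])
  have haeV : ∀ j : Fin (3 * s),
      (Polynomial.eval₂ MvPolynomial.C (MvPolynomial.X j) V) ≠ 0 := by
    intro j h
    have h2 := aux_eval_coord V (fun _ => (0 : ℂ)) j
    rw [h, map_zero] at h2
    rw [hVdef, vPoly_eval_zero] at h2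
    exact pow_ne_zero s (neg_ne_zero.mpr one_ne_zero) h2.symm
  have haeV' : ∀ᵐ z : Fin (3 * s) → ℂ ∂volume, ∀ j, V.eval (z j) ≠ 0 := by
    rw [MeasureTheory.ae_all_iff]
    intro j
    filter_upwards [aux_ae_eval_ne_zero (3 * s) _ (haeV j)] with z hz
    rwa [aux_eval_coord] at hz
  filter_upwards [aux_ae_eval_ne_zero (3 * s) Mv.det hdetne, haeV'] with z hdetz hVz
  refine ⟨hVz, ?_⟩
  intro v uh ut hvdeg huhdeg hutdeg hevalz
  have hv : v.natDegree ≤ s := Polynomial.natDegree_le_iff_degree_le.mpr hvdeg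
  have huh : uh.natDegree ≤ s - 1 := Polynomial.natDegree_le_iff_degree_le.mpr huhdeg
  have hut : ut.natDegree ≤ s - 1 := Polynomial.natDegree_le_iff_degree_le.mpr hutdeg
  set cval := v.coeff s / V.coeff s with hcval
  set v' := v - Polynomial.C cval * V with hv'
  set uh' := uh - Polynomial.C cval * Uh with huh'
  set ut' := ut - Polynomial.C cval * Ut with hut'
  have hv's : v'.coeff s = 0 := by
    rw [hv', Polynomial.coeff_sub, Polynomial.coeff_C_mul, hcval,
      div_mul_cancel₀ _ hVs, sub_self]
  have hv'lt : v'.natDegree < s := by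
    rcases eq_or_ne v' 0 with h | h
    · rw [h]; simpa using (show 0 < s by omega)
    · refine lt_of_le_of_ne ?_ ?_
      · rw [hv']
        refine le_trans (Polynomial.natDegree_sub_le _ _) (max_le hv ?_)
        exact le_trans (Polynomial.natDegree_C_mul_le _ _) (le_of_eq hVnd)
      · intro hd
        apply Polynomial.leadingCoeff_ne_zero.mpr h
        rw [Polynomial.leadingCoeff, hd]
        exact hv's
  have huh'lt : uh'.natDegree < s := by
    have h1 : uh'.natDegree ≤ s - 1 := by
      rw [huh']
      refine le_trans (Polynomial.natDegree_sub_le _ _) (max_le huh ?_)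
      exact le_trans (Polynomial.natDegree_C_mul_le _ _) (uHat_natDegree_le s n θp gp)
    omega
  have hut'lt : ut'.natDegree < s := by
    have h1 : ut'.natDegree ≤ s - 1 := by
      rw [hut']
      refine le_trans (Polynomial.natDegree_sub_le _ _) (max_le hut ?_)
      exact le_trans (Polynomial.natDegree_C_mul_le _ _) (uTilde_natDegree_le s θp gp)
    omega
  set cc : Fin (3 * s) → ℂ := fun i =>
    ![fun k : Fin s => v'.coeff k, fun k : Fin s => -(uh'.coeff k),
      fun k : Fin s => -(ut'.coeff k)] (e.symm i).1 (e.symm i).2 with hccdef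
  have hccq : ∀ q : Fin 3 × Fin s, cc (e q) =
      ![fun k : Fin s => v'.coeff k, fun k : Fin s => -(uh'.coeff k),
        fun k : Fin s => -(ut'.coeff k)] q.1 q.2 := by
    intro q
    rw [hccdef]
    simp only [Equiv.symm_apply_apply]
  have hFrep : ∑ i, Polynomial.C (cc i) * P i = U * v' - V * (X ^ n * uh' + ut') := by
    rw [← Equiv.sum_comp e (fun i => Polynomial.C (cc i) * P i)]
    have hterm : ∀ q : Fin 3 × Fin s, Polynomial.C (cc (e q)) * P (e q) =
        Polynomial.C (![(fun k : Fin s => v'.coeff k), (fun k : Fin s => -(uh'.coeff k)),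
            (fun k : Fin s => -(ut'.coeff k))] q.1 q.2) *
          (![U * X ^ ((q.2 : ℕ)), V * X ^ (n + (q.2 : ℕ)), V * X ^ ((q.2 : ℕ))] q.1) := by
      intro q
      rw [hccq, hPe]
    rw [Finset.sum_congr rfl fun q _ => hterm q, sum_blocks]
    have hnege : ∀ p : Polynomial ℂ,
        (∑ k : Fin s, Polynomial.C (-(p.coeff k)) * X ^ (k : ℕ)) =
          -(∑ k : Fin s, Polynomial.C (p.coeff k) * X ^ (k : ℕ)) := by
      intro p
      rw [← Finset.sum_neg_distrib]
      exact Finset.sum_congr rfl fun k _ => by rw [map_neg]; ring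
    rw [hnege uh', hnege ut', ← rep_fin s hs v' hv'lt, ← rep_fin s hs uh' huh'lt,
      ← rep_fin s hs ut' hut'lt]
    ring
  have hU2 : U = X ^ n * Uh + Ut := by rw [hUdef, hUhdef, hUtdef]; rfl
  have hU_eq : U * v' - V * (X ^ n * uh' + ut') = U * v - V * (X ^ n * uh + ut) := by
    rw [hv', huh', hut', hU2]
    ring
  have hFeval : ∀ j, (U * v - V * (X ^ n * uh + ut)).eval (z j) = 0 := by
    intro j
    have h := hevalz j
    rw [sub_sub, sub_eq_zero, div_mul_eq_mul_div, div_eq_iff (hVz j)] at h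
    simp only [Polynomial.eval_sub, Polynomial.eval_mul, Polynomial.eval_add,
      Polynomial.eval_pow, Polynomial.eval_X]
    linear_combination h
  have hvec : Matrix.vecMul cc (Matrix.of fun i j => (P i).eval (z j)) = 0 := by
    funext j
    have h1 : (∑ i, Polynomial.C (cc i) * P i).eval (z j) = 0 := by
      rw [hFrep, hU_eq]
      exact hFeval j
    rw [Polynomial.eval_finset_sum] at h1
    simp only [Polynomial.eval_mul, Polynomial.eval_C] at h1
    simpa [Matrix.vecMul, dotProduct] using h1
  have hccz : cc = 0 :=
    Matrix.eq_zero_of_vecMul_eq_zero (by rwa [hdeteval z] at hdetz) hvec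
  have hv'0 : v' = 0 := by
    rw [rep_fin s hs v' hv'lt]
    refine Finset.sum_eq_zero fun k _ => ?_
    have h := hccq (0, k)
    rw [hccz] at h
    simp only [Pi.zero_apply] at h
    have h2 : v'.coeff k = 0 := by simpa using h.symm
    rw [h2, map_zero, zero_mul]
  have huh'0 : uh' = 0 := by
    rw [rep_fin s hs uh' huh'lt]
    refine Finset.sum_eq_zero fun k _ => ?_
    have h := hccq (1, k)
    rw [hccz] at h
    simp only [Pi.zero_apply] at h
    have h2 : uh'.coeff k = 0 := by
      have := h.symm
      simp only [Matrix.cons_val_one, Matrix.head_cons] at this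
      exact neg_eq_zero.mp this
    rw [h2, map_zero, zero_mul]
  have hut'0 : ut' = 0 := by
    rw [rep_fin s hs ut' hut'lt]
    refine Finset.sum_eq_zero fun k _ => ?_
    have h := hccq (2, k)
    rw [hccz] at h
    simp only [Pi.zero_apply] at h
    have h2 : ut'.coeff k = 0 := by
      have := h.symm
      simp only [Matrix.cons_val_two, Matrix.tail_cons, Matrix.head_cons] at this
      exact neg_eq_zero.mp this
    rw [h2, map_zero, zero_mul]
  refine ⟨cval, ?_, ?_, ?_⟩
  · rw [hv'] at hv'0; linear_combination hv'0
  · rw [huh'] at huh'0; linear_combination huh'0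
  · rw [hut'] at hut'0; linear_combination hut'0
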